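/- (Nonnegativity constraints in the two-component case.) With μ^(i)_t = esssup[ w_i f^(i)_t / (w_1 f^(1)_t + w_2 f^(2)_t) ] for i ∈ {1,2}, t ∈ {x,y}, the nonnegativity of all four functions g^(i)_x, g^(i)_y in the two-parameter family is equivalent to the four inequalities: (1/γ)√(w'_1/w'_2) ≥ (μ^(2)_x − w_2)/√(w_1 w_2), (1/γ)√(w'_2/w'_1) ≥ (μ^(1)_x − w_1)/√(w_1 w_2), γ√(w'_1/w'_2) ≥ (μ^(2)_y − w_2)/√(w_1 w_2), γ√(w'_2/w'_1) ≥ (μ^(1)_y − w_1)/√(w_1 w_2). -/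

import Mathlib

open MeasureTheory

open Filter

lemma key_aux {α : Type*} [MeasurableSpace α] (μ : Measure α) (f1 f2 : α → ℝ)
    (h1m : Measurable f1) (h2m : Measurable f2)
    (h1 : ∀ x, 0 ≤ f1 x) (h2 : ∀ x, 0 ≤ f2 x)
    (w1 w2 : ℝ) (hw1 : 0 < w1) (hw2 : 0 < w2) (hw : w1 + w2 = 1)
    (c : ℝ) (hc : 0 < c)
    (hne : μ.withDensity (fun x => ENNReal.ofReal (w1 * f1 x + w2 * f2 x)) ≠ 0) :
    (0 ≤ᵐ[μ] fun x => (w1 * f1 x + w2 * f2 x) + c * (f1 x - f2 x)) ↔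
      essSup (fun x => w2 * f2 x / (w1 * f1 x + w2 * f2 x))
        (μ.withDensity (fun x => ENNReal.ofReal (w1 * f1 x + w2 * f2 x))) ≤
        w2 + w1 * w2 / c := by
  set P : α → ℝ := fun x => w1 * f1 x + w2 * f2 x with hP
  have hPm : Measurable P := (h1m.const_mul w1).add (h2m.const_mul w2)
  have hPnn : ∀ x, 0 ≤ P x := fun x =>
    add_nonneg (mul_nonneg hw1.le (h1 x)) (mul_nonneg hw2.le (h2 x))
  set h : α → ℝ := fun x => w2 * f2 x / P x with hh
  have hKpos : (0:ℝ) < w2 + w1 * w2 / c := by positivity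
  have hid : ∀ x, w2 * (w1 + c) * P x - w2 * f2 x * c
      = w1 * w2 * (P x + c * (f1 x - f2 x)) := by
    intro x
    simp only [hP]
    linear_combination (c * w2 * f2 x) * hw
  have hKeq : w2 + w1 * w2 / c = w2 * (w1 + c) / c := by field_simp; ring
  have key_pt : ∀ x, 0 < P x →
      (0 ≤ P x + c * (f1 x - f2 x) ↔ h x ≤ w2 + w1 * w2 / c) := by
    intro x hPx
    rw [hKeq, hh]
    rw [div_le_div_iff₀ hPx hc]
    constructor
    · intro hx
      have := mul_nonneg (mul_pos hw1 hw2).le hx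
      nlinarith [hid x]
    · intro hx
      have h3 : 0 ≤ w1 * w2 * (P x + c * (f1 x - f2 x)) := by
        rw [← hid x]; nlinarith
      exact nonneg_of_mul_nonneg_right h3 (mul_pos hw1 hw2)
  have hble : ∀ x, h x ≤ 1 := by
    intro x
    rcases lt_or_eq_of_le (hPnn x) with hPx | hPx
    · rw [hh, div_le_one hPx]
      show w2 * f2 x ≤ w1 * f1 x + w2 * f2 x
      linarith [mul_nonneg hw1.le (h1 x)]
    · simp [hh, ← hPx]
  have hbge : ∀ x, 0 ≤ h x :=
    fun x => div_nonneg (mul_nonneg hw2.le (h2 x)) (hPnn x)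
  have hDm : Measurable fun x => ENNReal.ofReal (P x) := hPm.ennreal_ofReal
  have hne' : (ae (μ.withDensity fun x => ENNReal.ofReal (P x))).NeBot :=
    ae_neBot.mpr hne
  have step1 : (0 ≤ᵐ[μ] fun x => P x + c * (f1 x - f2 x)) ↔
      (∀ᵐ x ∂(μ.withDensity fun x => ENNReal.ofReal (P x)),
        h x ≤ w2 + w1 * w2 / c) := by
    rw [ae_withDensity_iff hDm]
    constructor
    · intro hx
      filter_upwards [hx] with x hx0 hne0
      have hPx : 0 < P x := by
        rcases lt_or_eq_of_le (hPnn x) with hp | hp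
        · exact hp
        · exact absurd (by rw [← hp]; simp) hne0
      exact (key_pt x hPx).mp hx0
    · intro hx
      filter_upwards [hx] with x hx0
      rcases lt_or_eq_of_le (hPnn x) with hp | hp
      · exact (key_pt x hp).mpr (hx0 (ENNReal.ofReal_pos.mpr hp).ne')
      · have e1 : f1 x = 0 := by
          have a := mul_nonneg hw1.le (h1 x)
          have b := mul_nonneg hw2.le (h2 x)
          have : w1 * f1 x = 0 := by simp only [hP] at hp; linarith
          rcases mul_eq_zero.mp this with h | h
          · exact absurd h hw1.ne'
          · exact h
        have e2 : f2 x = 0 := by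
          have a := mul_nonneg hw1.le (h1 x)
          have b := mul_nonneg hw2.le (h2 x)
          have : w2 * f2 x = 0 := by simp only [hP] at hp; linarith
          rcases mul_eq_zero.mp this with h | h
          · exact absurd h hw2.ne'
          · exact h
        simp [hP, e1, e2]
  rw [step1]
  constructor
  · intro hx
    exact limsup_le_of_le (isCoboundedUnder_le_of_le _ hbge) hx
  · intro hS
    filter_upwards [ae_le_essSup (f := h) (isBoundedUnder_of ⟨1, hble⟩)] with x hx
    exact hx.trans hS

lemma key_aux2 {α : Type*} [MeasurableSpace α] (μ : Measure α) (f1 f2 : α → ℝ)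
    (h1m : Measurable f1) (h2m : Measurable f2)
    (h1 : ∀ x, 0 ≤ f1 x) (h2 : ∀ x, 0 ≤ f2 x)
    (w1 w2 : ℝ) (hw1 : 0 < w1) (hw2 : 0 < w2) (hw : w1 + w2 = 1)
    (c : ℝ) (hc : 0 < c)
    (hne : μ.withDensity (fun x => ENNReal.ofReal (w1 * f1 x + w2 * f2 x)) ≠ 0) :
    (0 ≤ᵐ[μ] fun x => (w1 * f1 x + w2 * f2 x) - c * (f1 x - f2 x)) ↔
      essSup (fun x => w1 * f1 x / (w1 * f1 x + w2 * f2 x))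
        (μ.withDensity (fun x => ENNReal.ofReal (w1 * f1 x + w2 * f2 x))) ≤
        w1 + w1 * w2 / c := by
  have e1 : (fun x => (w1 * f1 x + w2 * f2 x) - c * (f1 x - f2 x))
      = fun x => (w2 * f2 x + w1 * f1 x) + c * (f2 x - f1 x) := funext fun x => by ring
  have e2 : (fun x => ENNReal.ofReal (w1 * f1 x + w2 * f2 x))
      = fun x => ENNReal.ofReal (w2 * f2 x + w1 * f1 x) := funext fun x => by rw [add_comm]
  have e3 : (fun x => w1 * f1 x / (w1 * f1 x + w2 * f2 x))
      = fun x => w1 * f1 x / (w2 * f2 x + w1 * f1 x) :=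
    funext fun x => by rw [add_comm (w1 * f1 x)]
  rw [e1, e3, e2, show w1 + w1 * w2 / c = w1 + w2 * w1 / c by rw [mul_comm w1 w2]]
  exact key_aux μ f2 f1 h2m h1m h2 h1 w2 w1 hw2 hw1 (by linarith) c hc
    (by rw [← e2]; exact hne)

lemma sqrt_helper (A u v r : ℝ) (hA : 0 < A) (hu : 0 < u) (hv : 0 < v) (hr : 0 < r) :
    Real.sqrt A * (r * Real.sqrt (u / v)) = A / ((v / r) * Real.sqrt (A / (u * v))) := by
  have hsA : (0:ℝ) < Real.sqrt A := Real.sqrt_pos.mpr hA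
  have hsu : (0:ℝ) < Real.sqrt u := Real.sqrt_pos.mpr hu
  have hsv : (0:ℝ) < Real.sqrt v := Real.sqrt_pos.mpr hv
  have hA2 : Real.sqrt A ^ 2 = A := Real.sq_sqrt hA.le
  have hv2 : Real.sqrt v ^ 2 = v := Real.sq_sqrt hv.le
  rw [Real.sqrt_div hu.le, Real.sqrt_div hA.le, Real.sqrt_mul hu.le]
  field_simp
  ring_nf
  linear_combination v * hA2 - A * hv2

lemma iff_const (S A w0 u v r c : ℝ) (hA : 0 < A) (hu : 0 < u) (hv : 0 < v)
    (hr : 0 < r) (hc : c = (v / r) * Real.sqrt (A / (u * v))) :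
    ((S - w0) / Real.sqrt A ≤ r * Real.sqrt (u / v)) ↔ S ≤ w0 + A / c := by
  have hsA : (0:ℝ) < Real.sqrt A := Real.sqrt_pos.mpr hA
  rw [div_le_iff₀ hsA, sub_le_iff_le_add']
  have e : r * Real.sqrt (u / v) * Real.sqrt A = A / c := by
    rw [hc, mul_comm (r * _) _]; exact sqrt_helper A u v r hA hu hv hr
  rw [e]

lemma hne_aux {α : Type*} [MeasurableSpace α] (μ : Measure α) (f1 f2 : α → ℝ)
    (h1m : Measurable f1) (h2m : Measurable f2)
    (h1 : ∀ x, 0 ≤ f1 x) (h2 : ∀ x, 0 ≤ f2 x)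
    (hi1 : Integrable f1 μ) (hi2 : Integrable f2 μ)
    (ho1 : ∫ x, f1 x ∂μ = 1) (ho2 : ∫ x, f2 x ∂μ = 1)
    (w1 w2 : ℝ) (hw1 : 0 < w1) (hw2 : 0 < w2) (hw : w1 + w2 = 1) :
    μ.withDensity (fun x => ENNReal.ofReal (w1 * f1 x + w2 * f2 x)) ≠ 0 := by
  intro h0
  have hDm : Measurable fun x => ENNReal.ofReal (w1 * f1 x + w2 * f2 x) :=
    ((h1m.const_mul w1).add (h2m.const_mul w2)).ennreal_ofReal
  have hae := (withDensity_eq_zero_iff hDm.aemeasurable).mp h0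
  have hae2 : (fun x => w1 * f1 x + w2 * f2 x) =ᵐ[μ] 0 := by
    filter_upwards [hae] with x hx
    have hle : w1 * f1 x + w2 * f2 x ≤ 0 := by
      simpa [ENNReal.ofReal_eq_zero] using hx
    have hge : 0 ≤ w1 * f1 x + w2 * f2 x :=
      add_nonneg (mul_nonneg hw1.le (h1 x)) (mul_nonneg hw2.le (h2 x))
    simpa using le_antisymm hle hge
  have hint : ∫ x, (w1 * f1 x + w2 * f2 x) ∂μ = 0 := by
    rw [integral_congr_ae hae2]; simp
  rw [integral_add (hi1.const_mul w1) (hi2.const_mul w2),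
    integral_const_mul, integral_const_mul, ho1, ho2] at hint
  simp at hint
  linarith

/-- Nonnegativity constraints in the two-component case (eq. A.3): with
μ⁽ⁱ⁾_t = esssup[wᵢ f⁽ⁱ⁾_t / P_t] (w.r.t. the mixture marginal measure), the
a.e. nonnegativity of the four functions g of the two-parameter family is
equivalent to the four stated inequalities. -/
theorem statement_17 {Xt Yt : Type*} [MeasurableSpace Xt] [MeasurableSpace Yt]
    (μ : Measure Xt) (ν : Measure Yt) [SigmaFinite μ] [SigmaFinite ν]
    (w1 w2 : ℝ) (hw1 : 0 < w1) (hw2 : 0 < w2) (hw : w1 + w2 = 1)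
    (f1x f2x : Xt → ℝ) (f1y f2y : Yt → ℝ)
    (hf1x_meas : Measurable f1x) (hf2x_meas : Measurable f2x)
    (hf1y_meas : Measurable f1y) (hf2y_meas : Measurable f2y)
    (hf1x_nonneg : ∀ x, 0 ≤ f1x x) (hf2x_nonneg : ∀ x, 0 ≤ f2x x)
    (hf1y_nonneg : ∀ y, 0 ≤ f1y y) (hf2y_nonneg : ∀ y, 0 ≤ f2y y)
    (hf1x_int : Integrable f1x μ) (hf2x_int : Integrable f2x μ)
    (hf1y_int : Integrable f1y ν) (hf2y_int : Integrable f2y ν)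
    (hf1x_one : ∫ x, f1x x ∂μ = 1) (hf2x_one : ∫ x, f2x x ∂μ = 1)
    (hf1y_one : ∫ y, f1y y ∂ν = 1) (hf2y_one : ∫ y, f2y y ∂ν = 1)
    (hΔx : ¬ (f1x =ᵐ[μ] f2x)) (hΔy : ¬ (f1y =ᵐ[ν] f2y))
    (γ w1' : ℝ) (hγ : 0 < γ) (hw1' : 0 < w1') (hw1'lt : w1' < 1) :
    ((0 ≤ᵐ[μ] fun x => (w1 * f1x x + w2 * f2x x) +
          γ * (1 - w1') * Real.sqrt (w1 * w2 / (w1' * (1 - w1'))) * (f1x x - f2x x)) ∧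
     (0 ≤ᵐ[μ] fun x => (w1 * f1x x + w2 * f2x x) -
          γ * w1' * Real.sqrt (w1 * w2 / (w1' * (1 - w1'))) * (f1x x - f2x x)) ∧
     (0 ≤ᵐ[ν] fun y => (w1 * f1y y + w2 * f2y y) +
          ((1 - w1') / γ) * Real.sqrt (w1 * w2 / (w1' * (1 - w1'))) * (f1y y - f2y y)) ∧
     (0 ≤ᵐ[ν] fun y => (w1 * f1y y + w2 * f2y y) -
          (w1' / γ) * Real.sqrt (w1 * w2 / (w1' * (1 - w1'))) * (f1y y - f2y y)))
    ↔
    (((essSup (fun x => w2 * f2x x / (w1 * f1x x + w2 * f2x x))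
          (μ.withDensity (fun x => ENNReal.ofReal (w1 * f1x x + w2 * f2x x))) - w2) /
        Real.sqrt (w1 * w2) ≤ (1 / γ) * Real.sqrt (w1' / (1 - w1'))) ∧
     ((essSup (fun x => w1 * f1x x / (w1 * f1x x + w2 * f2x x))
          (μ.withDensity (fun x => ENNReal.ofReal (w1 * f1x x + w2 * f2x x))) - w1) /
        Real.sqrt (w1 * w2) ≤ (1 / γ) * Real.sqrt ((1 - w1') / w1')) ∧
     ((essSup (fun y => w2 * f2y y / (w1 * f1y y + w2 * f2y y))
          (ν.withDensity (fun y => ENNReal.ofReal (w1 * f1y y + w2 * f2y y))) - w2) /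
        Real.sqrt (w1 * w2) ≤ γ * Real.sqrt (w1' / (1 - w1'))) ∧
     ((essSup (fun y => w1 * f1y y / (w1 * f1y y + w2 * f2y y))
          (ν.withDensity (fun y => ENNReal.ofReal (w1 * f1y y + w2 * f2y y))) - w1) /
        Real.sqrt (w1 * w2) ≤ γ * Real.sqrt ((1 - w1') / w1'))) := by
  have hv : (0:ℝ) < 1 - w1' := by linarith
  have hA : (0:ℝ) < w1 * w2 := mul_pos hw1 hw2
  have hQ : (0:ℝ) < w1 * w2 / (w1' * (1 - w1')) := by positivity
  have hsq : (0:ℝ) < Real.sqrt (w1 * w2 / (w1' * (1 - w1'))) := Real.sqrt_pos.mpr hQ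
  have hγ' : (0:ℝ) < 1 / γ := by positivity
  have hneμ := hne_aux μ f1x f2x hf1x_meas hf2x_meas hf1x_nonneg hf2x_nonneg
    hf1x_int hf2x_int hf1x_one hf2x_one w1 w2 hw1 hw2 hw
  have hneν := hne_aux ν f1y f2y hf1y_meas hf2y_meas hf1y_nonneg hf2y_nonneg
    hf1y_int hf2y_int hf1y_one hf2y_one w1 w2 hw1 hw2 hw
  refine and_congr ?_ (and_congr ?_ (and_congr ?_ ?_))
  · exact (key_aux μ f1x f2x hf1x_meas hf2x_meas hf1x_nonneg hf2x_nonneg w1 w2 hw1 hw2 hw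
      (γ * (1 - w1') * Real.sqrt (w1 * w2 / (w1' * (1 - w1')))) (by positivity) hneμ).trans
      (iff_const _ (w1 * w2) w2 w1' (1 - w1') (1 / γ) _ hA hw1' hv hγ'
        (by rw [div_div_eq_mul_div, div_one, mul_comm (1 - w1') γ])).symm
  · exact (key_aux2 μ f1x f2x hf1x_meas hf2x_meas hf1x_nonneg hf2x_nonneg w1 w2 hw1 hw2 hw
      (γ * w1' * Real.sqrt (w1 * w2 / (w1' * (1 - w1')))) (by positivity) hneμ).trans
      (iff_const _ (w1 * w2) w1 (1 - w1') w1' (1 / γ) _ hA hv hw1' hγ'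
        (by rw [mul_comm (1 - w1') w1', div_div_eq_mul_div, div_one, mul_comm w1' γ])).symm
  · exact (key_aux ν f1y f2y hf1y_meas hf2y_meas hf1y_nonneg hf2y_nonneg w1 w2 hw1 hw2 hw
      (((1 - w1') / γ) * Real.sqrt (w1 * w2 / (w1' * (1 - w1')))) (by positivity) hneν).trans
      (iff_const _ (w1 * w2) w2 w1' (1 - w1') γ _ hA hw1' hv hγ rfl).symm
  · exact (key_aux2 ν f1y f2y hf1y_meas hf2y_meas hf1y_nonneg hf2y_nonneg w1 w2 hw1 hw2 hw
      ((w1' / γ) * Real.sqrt (w1 * w2 / (w1' * (1 - w1')))) (by positivity) hneν).trans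
      (iff_const _ (w1 * w2) w1 (1 - w1') w1' γ _ hA hv hw1' hγ
        (by rw [mul_comm (1 - w1') w1'])).symm
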